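/- For every p ≥ 4 there exists a positive semidefinite p×p matrix of rank p−2, vanishing at all nonedges of the cycle C_p, that lies on an extreme ray of the cone S^p_{⪰0}(C_p). Consequently the sparsity order of C_p is at least p−2. -/

import Mathlib

open Matrix BigOperators

/-- The cone of real positive semidefinite matrices with zeros at nonedges of a graph
with adjacency relation `Adj`. -/
def psdCone {n : Type*} [Fintype n] (Adj : n → n → Prop) : Set (Matrix n n ℝ) :=
  {X | X.PosSemidef ∧ ∀ i j, i ≠ j → ¬ Adj i j → X i j = 0}

/-- `X` lies on an extreme ray of the convex cone `S`: it belongs to `S` and whenever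
`X = A + B` with `A, B ∈ S`, both `A` and `B` are nonnegative multiples of `X`. -/
def IsExtremalIn {n : Type*} [Fintype n] (S : Set (Matrix n n ℝ)) (X : Matrix n n ℝ) : Prop :=
  X ∈ S ∧ ∀ A B : Matrix n n ℝ, A ∈ S → B ∈ S → X = A + B →
    (∃ c : ℝ, 0 ≤ c ∧ A = c • X) ∧ (∃ d : ℝ, 0 ≤ d ∧ B = d • X)

/-- Adjacency in the cycle `C_p` on `Fin p`: consecutive mod `p`. -/
def finCycAdj (p : ℕ) (i j : Fin p) : Prop :=
  (j : ℕ) = ((i : ℕ) + 1) % p ∨ (i : ℕ) = ((j : ℕ) + 1) % p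

namespace CycleAux

variable {n : ℕ}

/-- The `n × (n+2)` frame matrix whose Gram matrix is the extremal example. -/
def UU (n : ℕ) : Matrix (Fin n) (Fin (n+2)) ℝ := fun r j =>
  if (j : ℕ) ≤ n then (if (r : ℕ) + 1 = (j : ℕ) ∨ (r : ℕ) = (j : ℕ) then 1 else 0)
  else (-1) ^ (r : ℕ)

/-- An explicit right inverse of `UU`. -/
def WW (n : ℕ) : Matrix (Fin (n+2)) (Fin n) ℝ := fun j k =>
  if (j : ℕ) ≤ (k : ℕ) then (-1) ^ ((k : ℕ) - (j : ℕ)) else 0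

/-- The `i`-th column of `UU`. -/
def ucol (n : ℕ) (i : Fin (n+2)) : Fin n → ℝ := fun r => UU n r i

lemma ucol_zero (hn : 0 < n) (i : Fin (n+2)) (hi : (i : ℕ) = 0) :
    ucol n i = Pi.single (⟨0, hn⟩ : Fin n) 1 := by
  funext r
  simp only [ucol, UU, hi, Pi.single_apply, Fin.ext_iff, Fin.val_mk, false_or, or_self]
  split_ifs <;> solve | rfl | norm_num | (exfalso; omega) | (exfalso; simp_all) | (exfalso; simp_all; omega) | simp_all

lemma ucol_pair (i : Fin (n+2)) (h1 : 1 ≤ (i : ℕ)) (h2 : (i : ℕ) ≤ n - 1) (hn : 1 ≤ n) :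
    ucol n i = Pi.single (⟨(i : ℕ) - 1, by omega⟩ : Fin n) 1
      + Pi.single (⟨(i : ℕ), by omega⟩ : Fin n) 1 := by
  funext r
  simp only [ucol, UU, Pi.add_apply, Pi.single_apply, Fin.ext_iff, Fin.val_mk, false_or, or_self]
  split_ifs <;> solve | rfl | norm_num | (exfalso; omega) | (exfalso; simp_all) | (exfalso; simp_all; omega) | simp_all

lemma ucol_last (hn : 1 ≤ n) (i : Fin (n+2)) (hi : (i : ℕ) = n) :
    ucol n i = Pi.single (⟨n - 1, by omega⟩ : Fin n) 1 := by
  funext r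
  have hr := r.isLt
  simp only [ucol, UU, hi, Pi.single_apply, Fin.ext_iff, Fin.val_mk, false_or, or_self]
  split_ifs <;> solve | rfl | norm_num | (exfalso; omega) | (exfalso; simp_all) | (exfalso; simp_all; omega) | simp_all

lemma ucol_v (i : Fin (n+2)) (hi : (i : ℕ) = n + 1) :
    ucol n i = fun r : Fin n => (-1 : ℝ) ^ (r : ℕ) := by
  funext r
  simp only [ucol, UU, hi]
  rw [if_neg (by omega)]

lemma X_entry (i j : Fin (n+2)) : ((UU n)ᵀ * UU n) i j = ucol n i ⬝ᵥ ucol n j := by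
  simp [Matrix.mul_apply, dotProduct, ucol, transpose_apply]

lemma quad_entry (M : Matrix (Fin n) (Fin n) ℝ) (i j : Fin (n+2)) :
    ((UU n)ᵀ * M * UU n) i j = ucol n i ⬝ᵥ (M *ᵥ ucol n j) := by
  simp only [Matrix.mul_apply, dotProduct, mulVec, transpose_apply, Finset.sum_mul,
    Finset.mul_sum, ucol]
  rw [Finset.sum_comm]
  exact Finset.sum_congr rfl fun a _ => Finset.sum_congr rfl fun b _ => by ring

lemma nonadj_mk {a b : ℕ} (ha : a < n + 2) (hb : b < n + 2) (hab : a + 2 ≤ b)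
    (h0 : ¬(a = 0 ∧ b = n + 1)) :
    (⟨a, ha⟩ : Fin (n+2)) ≠ ⟨b, hb⟩ ∧ ¬ finCycAdj (n+2) ⟨a, ha⟩ ⟨b, hb⟩ := by
  constructor
  · simp only [ne_eq, Fin.mk.injEq]; omega
  · rintro (h | h)
    · have h' : b = (a + 1) % (n + 2) := h
      rw [Nat.mod_eq_of_lt (by omega)] at h'; omega
    · have h' : a = (b + 1) % (n + 2) := h
      rcases Nat.lt_or_ge (b + 1) (n + 2) with hlt | hge
      · rw [Nat.mod_eq_of_lt hlt] at h'; omega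
      · have hb1 : b = n + 1 := by omega
        rw [hb1] at h'
        simp only [Nat.mod_self] at h'
        omega

lemma nonadj_vals {i j : Fin (n+2)} (h : ¬ finCycAdj (n+2) i j) (hlt : (i : ℕ) < (j : ℕ)) :
    (i : ℕ) + 2 ≤ (j : ℕ) ∧ ¬((i : ℕ) = 0 ∧ (j : ℕ) = n + 1) := by
  have hj := j.isLt
  constructor
  · by_contra hc
    have hji : (j : ℕ) = (i : ℕ) + 1 := by omega
    exact h (Or.inl (by rw [hji, Nat.mod_eq_of_lt (by omega)]))
  · rintro ⟨h1, h2⟩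
    refine h (Or.inr ?_)
    rw [h1, h2]
    simp [Nat.mod_self]

lemma single_dot_single (a b : Fin n) (hab : a ≠ b) :
    Pi.single a (1 : ℝ) ⬝ᵥ Pi.single b 1 = 0 := by
  rw [single_dotProduct, Pi.single_apply, if_neg hab, mul_zero]

lemma UU_mul_WW (n : ℕ) : UU n * WW n = 1 := by
  ext r k
  rw [Matrix.mul_apply]
  rcases lt_trichotomy (r : ℕ) (k : ℕ) with hlt | heq | hgt
  · have hk := k.isLt
    have har : (r : ℕ) < n + 2 := by omega
    have har1 : (r : ℕ) + 1 < n + 2 := by omega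
    have hdecomp : (fun j : Fin (n+2) => UU n r j * WW n j k)
        = (Pi.single (⟨(r : ℕ), har⟩ : Fin (n+2)) ((-1 : ℝ) ^ ((k : ℕ) - (r : ℕ)))
          + Pi.single (⟨(r : ℕ) + 1, har1⟩ : Fin (n+2))
              ((-1 : ℝ) ^ ((k : ℕ) - ((r : ℕ) + 1)))) := by
      funext j
      simp only [UU, WW, Pi.add_apply, Pi.single_apply, Fin.ext_iff, Fin.val_mk]
      split_ifs <;> solve | rfl | norm_num | (exfalso; omega) | (exfalso; simp_all) | (exfalso; simp_all; omega) | simp_all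
    have hsum : (∑ j, UU n r j * WW n j k)
        = ∑ j, ((Pi.single (⟨(r : ℕ), har⟩ : Fin (n+2)) ((-1 : ℝ) ^ ((k : ℕ) - (r : ℕ)))
          + Pi.single (⟨(r : ℕ) + 1, har1⟩ : Fin (n+2))
              ((-1 : ℝ) ^ ((k : ℕ) - ((r : ℕ) + 1)))) : Fin (n+2) → ℝ) j :=
      Finset.sum_congr rfl fun j _ => congrFun hdecomp j
    rw [hsum]
    simp only [Pi.add_apply, Finset.sum_add_distrib, Finset.sum_pi_single', Finset.mem_univ,
      if_pos]
    rw [Matrix.one_apply_ne (Fin.ne_of_val_ne (by omega))]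
    have h1 : (k : ℕ) - (r : ℕ) = ((k : ℕ) - ((r : ℕ) + 1)) + 1 := by omega
    rw [h1, pow_succ]; ring
  · have hrk : r = k := Fin.ext heq
    subst hrk
    have hr := r.isLt
    have har : (r : ℕ) < n + 2 := by omega
    have hdecomp : (fun j : Fin (n+2) => UU n r j * WW n j r)
        = Pi.single (⟨(r : ℕ), har⟩ : Fin (n+2)) (1 : ℝ) := by
      funext j
      simp only [UU, WW, Pi.single_apply, Fin.ext_iff, Fin.val_mk]
      split_ifs <;> solve | rfl | norm_num | (exfalso; omega) | (exfalso; simp_all) | (exfalso; simp_all; omega) | simp_all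
    have hsum : (∑ j, UU n r j * WW n j r)
        = ∑ j, (Pi.single (⟨(r : ℕ), har⟩ : Fin (n+2)) (1 : ℝ)) j :=
      Finset.sum_congr rfl fun j _ => congrFun hdecomp j
    rw [hsum, Finset.sum_pi_single']
    simp [Matrix.one_apply_eq]
  · rw [Matrix.one_apply_ne (Fin.ne_of_val_ne (by omega))]
    apply Finset.sum_eq_zero
    intro j _
    have hr := r.isLt
    by_cases hj : (j : ℕ) ≤ (k : ℕ)
    · simp only [UU, WW]
      rw [if_pos (show (j : ℕ) ≤ n by omega), if_neg (by omega), zero_mul]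
    · simp only [WW]
      rw [if_neg hj, mul_zero]

lemma UU_rank (n : ℕ) : (UU n).rank = n := by
  refine le_antisymm (by simpa using (UU n).rank_le_card_height) ?_
  have h := Matrix.rank_mul_le_left (UU n) (WW n)
  rw [UU_mul_WW] at h
  simpa [Matrix.rank_one] using h

lemma X_psd (n : ℕ) : ((UU n)ᵀ * UU n).PosSemidef := by
  have h := Matrix.posSemidef_conjTranspose_mul_self (UU n)
  rwa [show (UU n)ᴴ = (UU n)ᵀ from by ext i j; simp [conjTranspose_apply]] at h

lemma X_nonedge (hn : 2 ≤ n) : ∀ i j : Fin (n+2), i ≠ j → ¬ finCycAdj (n+2) i j →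
    ((UU n)ᵀ * UU n) i j = 0 := by
  have aux : ∀ i j : Fin (n+2), (i : ℕ) < (j : ℕ) → ¬ finCycAdj (n+2) i j →
      ((UU n)ᵀ * UU n) i j = 0 := by
    intro i j hlt hnadj
    obtain ⟨hgap, hnot⟩ := nonadj_vals hnadj hlt
    have hj := j.isLt
    rw [X_entry]
    rcases Nat.lt_or_ge (j : ℕ) (n + 1) with hjn | hjn
    · -- j ≤ n
      rcases Nat.lt_or_ge (j : ℕ) n with hj2 | hj2
      · rw [ucol_pair j (by omega) (by omega) (by omega)]
        rcases Nat.eq_zero_or_pos (i : ℕ) with hi0 | hi0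
        · rw [ucol_zero (by omega) i hi0, dotProduct_add,
            single_dot_single _ _ (by simp only [ne_eq, Fin.mk.injEq]; omega),
            single_dot_single _ _ (by simp only [ne_eq, Fin.mk.injEq]; omega), add_zero]
        · rw [ucol_pair i (by omega) (by omega) (by omega), add_dotProduct, dotProduct_add,
            dotProduct_add,
            single_dot_single _ _ (by simp only [ne_eq, Fin.mk.injEq]; omega),
            single_dot_single _ _ (by simp only [ne_eq, Fin.mk.injEq]; omega),
            single_dot_single _ _ (by simp only [ne_eq, Fin.mk.injEq]; omega),
            single_dot_single _ _ (by simp only [ne_eq, Fin.mk.injEq]; omega)]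
          ring
      · -- j = n
        have hjn' : (j : ℕ) = n := by omega
        rw [ucol_last (by omega) j hjn']
        rcases Nat.eq_zero_or_pos (i : ℕ) with hi0 | hi0
        · rw [ucol_zero (by omega) i hi0,
            single_dot_single _ _ (by simp only [ne_eq, Fin.mk.injEq]; omega)]
        · rw [ucol_pair i (by omega) (by omega) (by omega), add_dotProduct,
            single_dot_single _ _ (by simp only [ne_eq, Fin.mk.injEq]; omega),
            single_dot_single _ _ (by simp only [ne_eq, Fin.mk.injEq]; omega)]
          ring
    · -- j = n+1
      have hjv : (j : ℕ) = n + 1 := by omega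
      have hi1 : 1 ≤ (i : ℕ) := by omega
      have hi2 : (i : ℕ) ≤ n - 1 := by omega
      rw [ucol_pair i hi1 hi2 (by omega), ucol_v j hjv, add_dotProduct,
        single_dotProduct, single_dotProduct, one_mul, one_mul]
      show (-1 : ℝ) ^ ((i : ℕ) - 1) + (-1 : ℝ) ^ (i : ℕ) = 0
      obtain ⟨m, hm⟩ : ∃ m, (i : ℕ) = m + 1 := ⟨(i : ℕ) - 1, by omega⟩
      rw [hm, Nat.add_sub_cancel, pow_succ]
      ring
  intro i j hne hnadj
  rcases lt_trichotomy (i : ℕ) (j : ℕ) with h | h | h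
  · exact aux i j h hnadj
  · exact absurd (Fin.ext h) hne
  · have hsymX : ((UU n)ᵀ * UU n) i j = ((UU n)ᵀ * UU n) j i := by
      rw [X_entry, X_entry, dotProduct_comm]
    rw [hsymX]
    exact aux j i h (fun hc => hnadj (Or.elim hc Or.inr Or.inl))

set_option maxHeartbeats 1000000 in
lemma M_scalar (hn : 2 ≤ n) (M : Matrix (Fin n) (Fin n) ℝ) (hsym : Mᵀ = M)
    (hE : ∀ i j : Fin (n+2), i ≠ j → ¬ finCycAdj (n+2) i j → ((UU n)ᵀ * M * UU n) i j = 0) :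
    ∃ c : ℝ, M = c • (1 : Matrix (Fin n) (Fin n) ℝ) := by
  obtain ⟨m, hm⟩ : ∃ m : ℕ → ℕ → ℝ, ∀ (a b : ℕ) (ha : a < n) (hb : b < n),
      m a b = M ⟨a, ha⟩ ⟨b, hb⟩ :=
    ⟨fun a b => if h : a < n ∧ b < n then M ⟨a, h.1⟩ ⟨b, h.2⟩ else 0,
      fun a b ha hb => dif_pos ⟨ha, hb⟩⟩
  have hE' : ∀ (a b : ℕ) (ha : a < n+2) (hb : b < n+2), a + 2 ≤ b → ¬(a = 0 ∧ b = n+1) →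
      ucol n ⟨a, ha⟩ ⬝ᵥ (M *ᵥ ucol n ⟨b, hb⟩) = 0 := by
    intro a b ha hb hab h0
    obtain ⟨hne, hnadj⟩ := nonadj_mk ha hb hab h0
    have h := hE _ _ hne hnadj
    rwa [quad_entry] at h
  -- the basic equations
  have e1' : m 0 (n-1) = 0 := by
    have h := hE' 0 n (by omega) (by omega) (by omega) (by omega)
    rw [ucol_zero (by omega) _ rfl, ucol_last (by omega) _ rfl] at h
    rw [hm 0 (n-1) (by omega) (by omega)]
    simpa [Matrix.mulVec_single, single_dotProduct] using h
  have e1 : ∀ j : ℕ, 2 ≤ j → j ≤ n-1 → m 0 (j-1) + m 0 j = 0 := by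
    intro j h2 h3
    have h := hE' 0 j (by omega) (by omega) (by omega) (by omega)
    rw [ucol_zero (by omega) _ rfl,
      ucol_pair ⟨j, by omega⟩ (show 1 ≤ j by omega) (show j ≤ n - 1 by omega) (by omega)] at h
    simp only [mulVec_add, Matrix.mulVec_single_one, Matrix.col_apply, dotProduct_add, single_dotProduct, one_mul,
      mul_one, Pi.add_apply] at h
    rw [hm 0 (j-1) (by omega) (by omega), hm 0 j (by omega) (by omega)]
    linarith [h]
  have e2 : ∀ i j : ℕ, 1 ≤ i → i + 2 ≤ j → j ≤ n-1 →
      m (i-1) (j-1) + m (i-1) j + m i (j-1) + m i j = 0 := by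
    intro i j h1 h2 h3
    have h := hE' i j (by omega) (by omega) (by omega) (by omega)
    rw [ucol_pair ⟨i, by omega⟩ (show 1 ≤ i by omega) (show i ≤ n - 1 by omega) (by omega),
      ucol_pair ⟨j, by omega⟩ (show 1 ≤ j by omega) (show j ≤ n - 1 by omega) (by omega)] at h
    simp only [mulVec_add, Matrix.mulVec_single_one, Matrix.col_apply, dotProduct_add, add_dotProduct,
      single_dotProduct, one_mul, mul_one, Pi.add_apply] at h
    rw [hm (i-1) (j-1) (by omega) (by omega), hm (i-1) j (by omega) (by omega),
      hm i (j-1) (by omega) (by omega), hm i j (by omega) (by omega)]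
    linarith [h]
  have e2' : ∀ i : ℕ, 1 ≤ i → i ≤ n-2 → m (i-1) (n-1) + m i (n-1) = 0 := by
    intro i h1 h2
    have h := hE' i n (by omega) (by omega) (by omega) (by omega)
    rw [ucol_pair ⟨i, by omega⟩ (show 1 ≤ i by omega) (show i ≤ n - 1 by omega) (by omega),
      ucol_last (by omega) _ rfl] at h
    simp only [Matrix.mulVec_single_one, Matrix.col_apply, add_dotProduct, single_dotProduct, one_mul, mul_one] at h
    rw [hm (i-1) (n-1) (by omega) (by omega), hm i (n-1) (by omega) (by omega)]
    linarith [h]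
  have e3 : ∀ i : ℕ, (h1 : 1 ≤ i) → (h2 : i ≤ n-1) →
      (∑ b : Fin n, M ⟨i-1, by omega⟩ b * (-1 : ℝ)^(b:ℕ))
        + (∑ b : Fin n, M ⟨i, by omega⟩ b * (-1 : ℝ)^(b:ℕ)) = 0 := by
    intro i h1 h2
    have h := hE' i (n+1) (by omega) (by omega) (by omega) (by omega)
    rw [ucol_pair ⟨i, by omega⟩ (show 1 ≤ i by omega) (show i ≤ n - 1 by omega) (by omega),
      ucol_v _ rfl] at h
    simp only [add_dotProduct, single_dotProduct, one_mul] at h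
    simp only [mulVec, dotProduct] at h
    exact h
  -- row zero vanishes off the diagonal
  have s1 : ∀ k : ℕ, k ≤ n-2 → m 0 (n-1-k) = 0 := by
    intro k
    induction k with
    | zero => intro _; simpa using e1'
    | succ k ih =>
      intro hk
      have hbase := ih (by omega)
      have h := e1 (n-1-k) (by omega) (by omega)
      rw [show n-1-k-1 = n-1-(k+1) from by omega] at h
      linarith [h, hbase]
  have s1' : ∀ b : ℕ, 1 ≤ b → b ≤ n-1 → m 0 b = 0 := by
    intro b h1 h2
    have h := s1 (n-1-b) (by omega)
    rwa [show n-1-(n-1-b) = b from by omega] at h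
  -- all entries above the diagonal vanish
  have col0 : ∀ k : ℕ, k ≤ n-2 → ∀ a : ℕ, a < n-1-k → m a (n-1-k) = 0 := by
    intro k
    induction k using Nat.strong_induction_on with
    | _ k ihk =>
      intro hk a
      induction a using Nat.strong_induction_on with
      | _ a iha =>
        intro ha
        rcases Nat.eq_zero_or_pos a with rfl | hapos
        · exact s1' (n-1-k) (by omega) (by omega)
        rcases Nat.eq_zero_or_pos k with rfl | hkpos
        · have h := e2' a hapos (by omega)
          have h2 := iha (a-1) (by omega) (by omega)
          simp only [Nat.sub_zero] at h2 ⊢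
          linarith [h, h2]
        · have h := e2 a (n-k) hapos (by omega) (by omega)
          have hk1 := ihk (k-1) (by omega) (by omega) (a-1) (by omega)
          have hk2 := ihk (k-1) (by omega) (by omega) a (by omega)
          rw [show n-1-(k-1) = n-k from by omega] at hk1 hk2
          have hbase := iha (a-1) (by omega) (by omega)
          rw [show n-k-1 = n-1-k from by omega] at h
          linarith [h, hk1, hk2, hbase]
  have key : ∀ a b : ℕ, a < b → b < n → m a b = 0 := by
    intro a b hab hb
    have h := col0 (n-1-b) (by omega) a (by omega)
    rwa [show n-1-(n-1-b) = b from by omega] at h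
  have offdiag : ∀ x y : Fin n, x ≠ y → M x y = 0 := by
    intro x y hxy
    rcases lt_trichotomy (x:ℕ) (y:ℕ) with h | h | h
    · have hk := key x y h y.isLt
      rwa [hm x y x.isLt y.isLt] at hk
    · exact absurd (Fin.ext h) hxy
    · have hk := key y x h x.isLt
      rw [hm y x y.isLt x.isLt] at hk
      have h2 : Mᵀ x y = M x y := congrFun (congrFun hsym x) y
      rw [transpose_apply] at h2
      rw [← h2]
      exact hk
  -- the diagonal is constant
  have hdiagstep : ∀ t : ℕ, t + 1 ≤ n-1 → m (t+1) (t+1) = m t t := by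
    intro t ht
    have h := e3 (t+1) (by omega) ht
    have hred : ∀ a : Fin n, (∑ b : Fin n, M a b * (-1 : ℝ)^(b:ℕ)) = M a a * (-1)^(a:ℕ) := by
      intro a
      apply Finset.sum_eq_single_of_mem a (Finset.mem_univ a)
      intro b _ hb
      rw [offdiag a b (Ne.symm hb), zero_mul]
    rw [hred, hred] at h
    simp only [Nat.add_sub_cancel, Fin.val_mk] at h
    rw [pow_succ] at h
    have hpm : (-1 : ℝ)^t ≠ 0 := pow_ne_zero _ (by norm_num)
    have h4 : (-1 : ℝ)^t * (M ⟨t, by omega⟩ ⟨t, by omega⟩ - M ⟨t+1, by omega⟩ ⟨t+1, by omega⟩)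
        = 0 := by linear_combination h
    rcases mul_eq_zero.mp h4 with h5 | h5
    · exact absurd h5 hpm
    · have h6 := sub_eq_zero.mp h5
      rw [hm (t+1) (t+1) (by omega) (by omega), hm t t (by omega) (by omega)]
      exact h6.symm
  have hdiag : ∀ a : ℕ, a < n → m a a = m 0 0 := by
    intro a
    induction a with
    | zero => intro _; rfl
    | succ t ih =>
      intro ha
      rw [hdiagstep t (by omega), ih (by omega)]
  refine ⟨m 0 0, ?_⟩
  ext x y
  rw [Matrix.smul_apply, Matrix.one_apply]
  by_cases hxy : x = y
  · subst hxy
    rw [if_pos rfl, smul_eq_mul, mul_one]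
    have h0 : m (x:ℕ) (x:ℕ) = M x x := hm x x x.isLt x.isLt
    rw [← h0]
    exact hdiag x x.isLt
  · rw [if_neg hxy, smul_eq_mul, mul_zero]
    exact offdiag x y hxy

set_option maxHeartbeats 1000000 in
lemma extremal_half (hn : 2 ≤ n) {A : Matrix (Fin (n+2)) (Fin (n+2)) ℝ}
    (hA : A ∈ psdCone (finCycAdj (n+2)))
    (hB : (((UU n)ᵀ * UU n) - A).PosSemidef) :
    ∃ c : ℝ, 0 ≤ c ∧ A = c • ((UU n)ᵀ * UU n) := by
  obtain ⟨hApsd, hAzero⟩ := hA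
  have hker : ∀ z : Fin (n+2) → ℝ, UU n *ᵥ z = 0 → A *ᵥ z = 0 := by
    intro z hz
    have hXz : ((UU n)ᵀ * UU n) *ᵥ z = 0 := by
      rw [← mulVec_mulVec, hz, mulVec_zero]
    have hstar : star z = z := by funext t; simp
    have h1 : 0 ≤ z ⬝ᵥ (A *ᵥ z) := by
      have := hApsd.dotProduct_mulVec_nonneg z
      rwa [hstar] at this
    have h2 : 0 ≤ z ⬝ᵥ ((((UU n)ᵀ * UU n) - A) *ᵥ z) := by
      have := hB.dotProduct_mulVec_nonneg z
      rwa [hstar] at this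
    have h3 : z ⬝ᵥ ((((UU n)ᵀ * UU n) - A) *ᵥ z) = - (z ⬝ᵥ (A *ᵥ z)) := by
      rw [sub_mulVec, dotProduct_sub, hXz, dotProduct_zero]
      ring
    have hq : z ⬝ᵥ (A *ᵥ z) = 0 := by linarith
    refine (hApsd.dotProduct_mulVec_zero_iff z).mp ?_
    rwa [hstar]
  have hproj : ∀ z, A *ᵥ ((WW n * UU n) *ᵥ z) = A *ᵥ z := by
    intro z
    have hz : UU n *ᵥ ((WW n * UU n) *ᵥ z - z) = 0 := by
      rw [mulVec_sub, mulVec_mulVec, ← Matrix.mul_assoc, UU_mul_WW, Matrix.one_mul, sub_self]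
    have h := hker _ hz
    rw [mulVec_sub] at h
    exact sub_eq_zero.mp h
  have hAP : A * (WW n * UU n) = A := by
    ext i j
    have h := congrFun (hproj (Pi.single j 1)) i
    rw [mulVec_mulVec] at h
    simpa [Matrix.mulVec_single] using h
  have hAsym : Aᵀ = A := by
    ext i j
    rw [transpose_apply]
    have h := congrFun (congrFun hApsd.1 i) j
    rw [conjTranspose_apply] at h
    simpa using h
  have hPA : (UU n)ᵀ * ((WW n)ᵀ * A) = A := by
    have h := congrArg Matrix.transpose hAP
    rw [Matrix.transpose_mul, Matrix.transpose_mul, hAsym] at h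
    rw [Matrix.mul_assoc] at h
    exact h
  have hrep : A = (UU n)ᵀ * ((WW n)ᵀ * A * WW n) * UU n := by
    calc A = (UU n)ᵀ * ((WW n)ᵀ * A) := hPA.symm
      _ = (UU n)ᵀ * ((WW n)ᵀ * (A * (WW n * UU n))) := by rw [hAP]
      _ = (UU n)ᵀ * ((WW n)ᵀ * A * WW n) * UU n := by
          simp only [Matrix.mul_assoc]
  have hMsym : ((WW n)ᵀ * A * WW n)ᵀ = (WW n)ᵀ * A * WW n := by
    rw [Matrix.transpose_mul, Matrix.transpose_mul, Matrix.transpose_transpose, hAsym,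
      Matrix.mul_assoc]
  have hE : ∀ i j : Fin (n+2), i ≠ j → ¬ finCycAdj (n+2) i j →
      ((UU n)ᵀ * ((WW n)ᵀ * A * WW n) * UU n) i j = 0 := by
    intro i j h1 h2
    rw [← hrep]
    exact hAzero i j h1 h2
  obtain ⟨c, hc⟩ := M_scalar hn ((WW n)ᵀ * A * WW n) hMsym hE
  have hAc : A = c • ((UU n)ᵀ * UU n) := by
    rw [hrep, hc, Matrix.mul_smul, Matrix.mul_one, Matrix.smul_mul]
  have hX00 : ((UU n)ᵀ * UU n) 0 0 = 1 := by
    rw [X_entry, ucol_zero (by omega) 0 (by simp), single_dotProduct, Pi.single_apply,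
      if_pos rfl, one_mul]
  have hd : 0 ≤ A 0 0 := by
    have h := hApsd.dotProduct_mulVec_nonneg (Pi.single 0 1)
    have hstar : star (Pi.single (0 : Fin (n+2)) (1:ℝ)) = (Pi.single 0 1 : Fin (n+2) → ℝ) := by funext t; simp
    rw [hstar] at h
    simpa [Matrix.mulVec_single, single_dotProduct] using h
  have hc0 : 0 ≤ c := by
    have h := congrFun (congrFun hAc 0) 0
    rw [Matrix.smul_apply, hX00, smul_eq_mul, mul_one] at h
    linarith
  exact ⟨c, hc0, hAc⟩

end CycleAux

/-- For every `p ≥ 4` there is a PSD `p × p` matrix of rank `p - 2`, vanishing at all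
nonedges of the cycle `C_p`, lying on an extreme ray of `S^p_⪰0(C_p)`; consequently the
sparsity order of `C_p` is at least `p - 2`. -/
theorem cycle_has_extremal_rank_p_sub_two (p : ℕ) (hp : 4 ≤ p) :
    ∃ X : Matrix (Fin p) (Fin p) ℝ,
      X ∈ psdCone (finCycAdj p) ∧ X.rank = p - 2 ∧
      IsExtremalIn (psdCone (finCycAdj p)) X := by
  obtain ⟨n, rfl⟩ : ∃ n, p = n + 2 := ⟨p - 2, by omega⟩
  have hn : 2 ≤ n := by omega
  refine ⟨(CycleAux.UU n)ᵀ * CycleAux.UU n,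
    ⟨CycleAux.X_psd n, CycleAux.X_nonedge hn⟩, ?_, ?_⟩
  · rw [Matrix.rank_transpose_mul_self, CycleAux.UU_rank]
    omega
  · refine ⟨⟨CycleAux.X_psd n, CycleAux.X_nonedge hn⟩, ?_⟩
    intro A B hA hB hsum
    have hBeq : ((CycleAux.UU n)ᵀ * CycleAux.UU n) - A = B := by
      rw [hsum, add_sub_cancel_left]
    have hAeq : ((CycleAux.UU n)ᵀ * CycleAux.UU n) - B = A := by
      rw [hsum, add_sub_cancel_right]
    constructor
    · exact CycleAux.extremal_half hn hA (by rw [hBeq]; exact hB.1)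
    · exact CycleAux.extremal_half hn hB (by rw [hAeq]; exact hA.1)
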